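/- Under a product probability, the range C(I) of the cluster operator C_I equals the linear span of products ∏_{i∈I} g_i where each g_i depends only on site i and has zero expectation, and the full function space decomposes as the orthogonal direct sum F = ⊕_I C(I) over all subsets I of sites. -/

import Mathlib

/-- `Depends f I` : the configuration function `f` depends only on the sites in `I`. -/
def Depends {S : Type*} {Sps : S → Type*} (f : (∀ i, Sps i) → ℂ) (I : Finset S) : Prop :=
  ∀ x y : ∀ i, Sps i, (∀ i ∈ I, x i = y i) → f x = f y

set_option linter.unusedSectionVars false

namespace ClusterAux

open scoped Classical

variable {S : Type*} [Fintype S] [DecidableEq S]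
  {Sps : S → Type*} [∀ i, Fintype (Sps i)]

/-- weight of a configuration -/
def cw (p : ∀ i, Sps i → ℝ) (x : ∀ i, Sps i) : ℂ := ∏ i, (p i (x i) : ℂ)

/-- weighted inner product -/
noncomputable def cip (p : ∀ i, Sps i → ℝ) (f g : (∀ i, Sps i) → ℂ) : ℂ :=
  ∑ x, cw p x * (starRingEnd ℂ) (f x) * g x

/-- merge two configurations along `I` -/
def merge (I : Finset S) (x y : ∀ i, Sps i) : ∀ i, Sps i :=
  fun i => if i ∈ I then x i else y i

/-- concrete conditional expectation -/
noncomputable def Ec (p : ∀ i, Sps i → ℝ) (I : Finset S) (f : (∀ i, Sps i) → ℂ) : (∀ i, Sps i) → ℂ :=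
  fun x => ∑ y, cw p y * f (merge I x y)

variable (p : ∀ i, Sps i → ℝ)

lemma conj_cw (x : ∀ i, Sps i) : (starRingEnd ℂ) (cw p x) = cw p x := by
  simp [cw, map_prod, Complex.conj_ofReal]

lemma cw_sum_one (hsum : ∀ i, ∑ s, p i s = 1) : (∑ y : ∀ i, Sps i, cw p y) = 1 := by
  unfold cw
  rw [← Fintype.prod_sum (fun i s => (p i s : ℂ))]
  have : ∀ i, (∑ s, (p i s : ℂ)) = 1 := by
    intro i
    rw [← Complex.ofReal_sum, hsum i, Complex.ofReal_one]
  simp [this]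

lemma merge_merge (I : Finset S) (x y : ∀ i, Sps i) :
    merge I (merge I x y) (merge I y x) = x := by
  funext i; by_cases h : i ∈ I <;> simp [merge, h]

lemma cw_merge_mul (I : Finset S) (x y : ∀ i, Sps i) :
    cw p (merge I x y) * cw p (merge I y x) = cw p x * cw p y := by
  unfold cw
  rw [← Finset.prod_mul_distrib, ← Finset.prod_mul_distrib]
  refine Finset.prod_congr rfl fun i _ => ?_
  by_cases h : i ∈ I <;> simp [merge, h, mul_comm]

lemma Ec_fix (hsum : ∀ i, ∑ s, p i s = 1) (I : Finset S) (f : (∀ i, Sps i) → ℂ)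
    (hf : Depends f I) : Ec p I f = f := by
  funext x
  unfold Ec
  have h1 : ∀ y, f (merge I x y) = f x := fun y =>
    (hf (merge I x y) x (fun i hi => by simp [merge, hi])).symm ▸ rfl
  calc ∑ y, cw p y * f (merge I x y) = ∑ y, cw p y * f x := by
        refine Finset.sum_congr rfl fun y _ => by rw [hf (merge I x y) x (fun i hi => by simp [merge, hi])]
    _ = (∑ y, cw p y) * f x := by rw [Finset.sum_mul]
    _ = f x := by rw [cw_sum_one p hsum, one_mul]


lemma prod_merge (A J : Finset S) (g : ∀ i, Sps i → ℂ) (x y : ∀ i, Sps i) :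
    (∏ i ∈ J, g i (merge A x y i)) =
      (∏ i ∈ J.filter (· ∈ A), g i (x i)) * ∏ i ∈ J.filter (· ∉ A), g i (y i) := by
  rw [← Finset.prod_filter_mul_prod_filter_not J (· ∈ A)]
  congr 1 <;> refine Finset.prod_congr rfl fun i hi => ?_ <;>
    simp only [Finset.mem_filter] at hi <;> simp [merge, hi.2]

lemma Ec_vanish (A J : Finset S) (g : ∀ i, Sps i → ℂ)
    (hg : ∀ i ∈ J, ∑ s, (p i s : ℂ) * g i s = 0) (hJA : ¬ J ⊆ A) :
    Ec p A (fun x => ∏ i ∈ J, g i (x i)) = 0 := by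
  obtain ⟨i0, hi0J, hi0A⟩ := Finset.not_subset.mp hJA
  funext x
  unfold Ec
  simp only [Pi.zero_apply]
  have key : ∀ y : ∀ i, Sps i,
      cw p y * ∏ i ∈ J, g i (merge A x y i) =
      (∏ i ∈ J.filter (· ∈ A), g i (x i)) *
        ∏ i, ((p i (y i) : ℂ) * (if i ∈ J.filter (· ∉ A) then g i (y i) else 1)) := by
    intro y
    rw [prod_merge, Finset.prod_mul_distrib]
    have : (∏ i ∈ J.filter (· ∉ A), g i (y i)) =
        ∏ i, (if i ∈ J.filter (· ∉ A) then g i (y i) else 1) := by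
      rw [Finset.prod_ite_mem, Finset.univ_inter]
    rw [this]
    unfold cw
    ring
  rw [Finset.sum_congr rfl (fun y _ => key y), ← Finset.mul_sum,
    ← Fintype.prod_sum (fun i s => (p i s : ℂ) * (if i ∈ J.filter (· ∉ A) then g i s else 1))]
  have hz : (∑ s, (p i0 s : ℂ) * (if i0 ∈ J.filter (· ∉ A) then g i0 s else 1)) = 0 := by
    have : i0 ∈ J.filter (· ∉ A) := Finset.mem_filter.mpr ⟨hi0J, hi0A⟩
    simp only [this, if_true]
    exact hg i0 hi0J
  rw [Finset.prod_eq_zero (Finset.mem_univ i0) hz, mul_zero]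

lemma cip_Ec (A : Finset S) (f g : (∀ i, Sps i) → ℂ) :
    cip p (Ec p A f) g = cip p f (Ec p A g) := by
  unfold cip Ec
  have lhs : ∀ x, cw p x * (starRingEnd ℂ) (∑ y, cw p y * f (merge A x y)) * g x
      = ∑ y, cw p x * cw p y * (starRingEnd ℂ) (f (merge A x y)) * g x := by
    intro x
    rw [map_sum, Finset.mul_sum, Finset.sum_mul]
    refine Finset.sum_congr rfl fun y _ => ?_
    rw [map_mul, conj_cw]
    ring
  have rhs : ∀ x, cw p x * (starRingEnd ℂ) (f x) * (∑ y, cw p y * g (merge A x y))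
      = ∑ y, cw p x * cw p y * (starRingEnd ℂ) (f x) * g (merge A x y) := by
    intro x
    rw [Finset.mul_sum]
    refine Finset.sum_congr rfl fun y _ => by ring
  rw [Finset.sum_congr rfl (fun x _ => lhs x), Finset.sum_congr rfl (fun x _ => rhs x),
    ← Fintype.sum_prod_type', ← Fintype.sum_prod_type']
  refine Fintype.sum_equiv ⟨fun z => (merge A z.1 z.2, merge A z.2 z.1),
    fun z => (merge A z.1 z.2, merge A z.2 z.1), fun z => ?_, fun z => ?_⟩ _ _ (fun z => ?_)
  · exact Prod.ext (merge_merge A z.1 z.2) (merge_merge A z.2 z.1)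
  · exact Prod.ext (merge_merge A z.1 z.2) (merge_merge A z.2 z.1)
  · simp only [Equiv.coe_fn_mk]
    rw [merge_merge A z.1 z.2, cw_merge_mul]

lemma cip_definite (hp : ∀ i s, 0 < p i s) (f : (∀ i, Sps i) → ℂ)
    (h : cip p f f = 0) : f = 0 := by
  have hterm : ∀ x, cw p x * (starRingEnd ℂ) (f x) * f x
      = ((∏ i, p i (x i)) * Complex.normSq (f x) : ℝ) := by
    intro x
    rw [mul_assoc, mul_comm ((starRingEnd ℂ) (f x)) (f x), Complex.mul_conj]
    push_cast [cw]
    ring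
  unfold cip at h
  rw [Finset.sum_congr rfl (fun x _ => hterm x), ← Complex.ofReal_sum,
    Complex.ofReal_eq_zero] at h
  have hnn : ∀ x ∈ Finset.univ, (0:ℝ) ≤ (∏ i, p i (x i)) * Complex.normSq (f x) :=
    fun x _ => mul_nonneg (Finset.prod_nonneg fun i _ => (hp i (x i)).le) (Complex.normSq_nonneg _)
  have := (Finset.sum_eq_zero_iff_of_nonneg hnn).mp h
  funext x
  have hx := this x (Finset.mem_univ x)
  have hprod : (0:ℝ) < ∏ i, p i (x i) := Finset.prod_pos fun i _ => hp i (x i)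
  have : Complex.normSq (f x) = 0 := by
    rcases mul_eq_zero.mp hx with h' | h'
    · exact absurd h' (ne_of_gt hprod)
    · exact h'
  simpa using Complex.normSq_eq_zero.mp this


lemma cip_conj_symm (f g : (∀ i, Sps i) → ℂ) :
    cip p f g = (starRingEnd ℂ) (cip p g f) := by
  unfold cip
  rw [map_sum]
  refine Finset.sum_congr rfl fun x _ => ?_
  rw [map_mul, map_mul, conj_cw, Complex.conj_conj]
  ring

lemma cip_add_left (f f' g : (∀ i, Sps i) → ℂ) :
    cip p (f + f') g = cip p f g + cip p f' g := by
  unfold cip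
  rw [← Finset.sum_add_distrib]
  refine Finset.sum_congr rfl fun x _ => ?_
  simp [map_add]; ring

lemma cip_add_right (f g g' : (∀ i, Sps i) → ℂ) :
    cip p f (g + g') = cip p f g + cip p f g' := by
  unfold cip
  rw [← Finset.sum_add_distrib]
  refine Finset.sum_congr rfl fun x _ => ?_
  simp; ring

lemma cip_smul_left (c : ℂ) (f g : (∀ i, Sps i) → ℂ) :
    cip p (c • f) g = (starRingEnd ℂ) c * cip p f g := by
  unfold cip
  rw [Finset.mul_sum]
  refine Finset.sum_congr rfl fun x _ => ?_
  simp [map_mul]; ring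

lemma cip_smul_right (c : ℂ) (f g : (∀ i, Sps i) → ℂ) :
    cip p f (c • g) = c * cip p f g := by
  unfold cip
  rw [Finset.mul_sum]
  refine Finset.sum_congr rfl fun x _ => ?_
  simp; ring

lemma cip_zero_left (g : (∀ i, Sps i) → ℂ) : cip p 0 g = 0 := by
  unfold cip; simp

lemma cip_zero_right (f : (∀ i, Sps i) → ℂ) : cip p f 0 = 0 := by
  unfold cip; simp

/-- product over `J` depends only on `J` -/
lemma depends_prod (J : Finset S) (g : ∀ i, Sps i → ℂ) :
    Depends (fun x => ∏ i ∈ J, g i (x i)) J := by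
  intro x y h
  exact Finset.prod_congr rfl fun i hi => by rw [h i hi]

lemma depends_mono {f : (∀ i, Sps i) → ℂ} {I J : Finset S} (h : Depends f I) (hIJ : I ⊆ J) :
    Depends f J := fun x y hxy => h x y fun i hi => hxy i (hIJ hi)

/-- a function depending only on `A` is orthogonal to a mean-zero product not supported in `A` -/
lemma cip_depends_meanzero (hsum : ∀ i, ∑ s, p i s = 1) (A J : Finset S)
    (u : (∀ i, Sps i) → ℂ) (hu : Depends u A) (g : ∀ i, Sps i → ℂ)
    (hg : ∀ i ∈ J, ∑ s, (p i s : ℂ) * g i s = 0) (hJA : ¬ J ⊆ A) :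
    cip p u (fun x => ∏ i ∈ J, g i (x i)) = 0 := by
  rw [← Ec_fix p hsum A u hu, cip_Ec, Ec_vanish p A J g hg hJA, cip_zero_right]

/-- orthogonality of mean-zero products over distinct index sets -/
lemma cip_prod_prod (I J : Finset S) (a b : ∀ i, Sps i → ℂ)
    (ha : ∀ i ∈ I, ∑ s, (p i s : ℂ) * a i s = 0)
    (hb : ∀ i ∈ J, ∑ s, (p i s : ℂ) * b i s = 0) (hIJ : I ≠ J) :
    cip p (fun x => ∏ i ∈ I, a i (x i)) (fun x => ∏ i ∈ J, b i (x i)) = 0 := by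
  have key : ∀ x : ∀ i, Sps i,
      cw p x * (starRingEnd ℂ) (∏ i ∈ I, a i (x i)) * (∏ i ∈ J, b i (x i))
      = ∏ i, ((p i (x i) : ℂ) * (if i ∈ I then (starRingEnd ℂ) (a i (x i)) else 1)
          * (if i ∈ J then b i (x i) else 1)) := by
    intro x
    rw [map_prod]
    have h1 : (∏ i ∈ I, (starRingEnd ℂ) (a i (x i))) =
        ∏ i, (if i ∈ I then (starRingEnd ℂ) (a i (x i)) else 1) := by
      rw [Finset.prod_ite_mem, Finset.univ_inter]
    have h2 : (∏ i ∈ J, b i (x i)) = ∏ i, (if i ∈ J then b i (x i) else 1) := by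
      rw [Finset.prod_ite_mem, Finset.univ_inter]
    rw [h1, h2]
    unfold cw
    rw [← Finset.prod_mul_distrib, ← Finset.prod_mul_distrib]
  unfold cip
  rw [Finset.sum_congr rfl (fun x _ => key x),
    ← Fintype.prod_sum (fun i s => (p i s : ℂ) * (if i ∈ I then (starRingEnd ℂ) (a i s) else 1)
        * (if i ∈ J then b i s else 1))]
  obtain ⟨i0, hi0⟩ : ∃ i0, (i0 ∈ I ∧ i0 ∉ J) ∨ (i0 ∈ J ∧ i0 ∉ I) := by
    obtain ⟨i0, hi0⟩ := Finset.symmDiff_nonempty.mpr hIJ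
    exact ⟨i0, Finset.mem_symmDiff.mp hi0⟩
  refine Finset.prod_eq_zero (Finset.mem_univ i0) ?_
  rcases hi0 with ⟨h1, h2⟩ | ⟨h1, h2⟩
  · simp only [h1, if_true, h2, if_false, mul_one]
    have : (∑ s, (p i0 s : ℂ) * (starRingEnd ℂ) (a i0 s)) =
        (starRingEnd ℂ) (∑ s, (p i0 s : ℂ) * a i0 s) := by
      rw [map_sum]
      exact Finset.sum_congr rfl fun s _ => by rw [map_mul, Complex.conj_ofReal]
    rw [this, ha i0 h1, map_zero]
  · simp only [h1, if_true, h2, if_false, mul_one]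
    exact hb i0 h1


/-- every function is in the span of full products -/
lemma span_fullprod_top :
    Submodule.span ℂ {f : (∀ i, Sps i) → ℂ |
      ∃ g : ∀ i, Sps i → ℂ, f = fun x => ∏ i, g i (x i)} = ⊤ := by
  classical
  rw [eq_top_iff]
  intro f _
  have hdelta : ∀ a : ∀ i, Sps i,
      (fun x : ∀ i, Sps i => ∏ i, (if x i = a i then (1:ℂ) else 0)) = fun x => if x = a then 1 else 0 := by
    intro a
    funext x
    by_cases hxa : x = a
    · subst hxa; simp
    · obtain ⟨i0, hi0⟩ := Function.ne_iff.mp hxa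
      rw [if_neg hxa]
      exact Finset.prod_eq_zero (Finset.mem_univ i0) (if_neg hi0)
  have hf : f = ∑ a : ∀ i, Sps i, f a • (fun x : ∀ i, Sps i => ∏ i, (if x i = a i then (1:ℂ) else 0)) := by
    funext x
    rw [Finset.sum_apply]
    have : ∀ a : ∀ i, Sps i,
        (f a • (fun x : ∀ i, Sps i => ∏ i, (if x i = a i then (1:ℂ) else 0))) x
          = if x = a then f a else 0 := by
      intro a
      rw [hdelta a]
      simp only [Pi.smul_apply, smul_eq_mul]
      split <;> simp
    rw [Finset.sum_congr rfl (fun a _ => this a), Finset.sum_ite_eq]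
    simp
  rw [hf]
  exact Submodule.sum_mem _ fun a _ => Submodule.smul_mem _ _
    (Submodule.subset_span ⟨fun i s => if s = a i then 1 else 0, rfl⟩)

/-- the centered part of a single-site function has zero mean -/
lemma meanzero_sub (hsum : ∀ i, ∑ s, p i s = 1) (g : ∀ i, Sps i → ℂ) (i : S) :
    ∑ s, (p i s : ℂ) * (g i s - ∑ t, (p i t : ℂ) * g i t) = 0 := by
  have hone : (∑ s, (p i s : ℂ)) = 1 := by
    rw [← Complex.ofReal_sum, hsum i, Complex.ofReal_one]
  rw [Finset.sum_congr rfl (fun s _ => mul_sub ((p i s : ℂ)) _ _), Finset.sum_sub_distrib,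
    ← Finset.sum_mul, hone, one_mul, sub_self]

/-- expansion of a full product into centered products -/
lemma prod_expand (g : ∀ i, Sps i → ℂ) :
    (fun x : ∀ i, Sps i => ∏ i, g i (x i)) =
    ∑ J : Finset S, (∏ i ∈ Jᶜ, (∑ s, (p i s : ℂ) * g i s)) •
      (fun x : ∀ i, Sps i => ∏ i ∈ J, (g i (x i) - ∑ s, (p i s : ℂ) * g i s)) := by
  funext x
  rw [Finset.sum_apply]
  have lhs : (∏ i, g i (x i)) =
      ∏ i, ((g i (x i) - ∑ s, (p i s : ℂ) * g i s) + ∑ s, (p i s : ℂ) * g i s) := by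
    refine Finset.prod_congr rfl fun i _ => by ring
  rw [lhs, Fintype.prod_add]
  refine Finset.sum_congr rfl fun J _ => ?_
  simp only [Pi.smul_apply, smul_eq_mul]
  ring

end ClusterAux

open ClusterAux in
theorem cluster_subspaces_span_and_orthogonal_decomposition
    {S : Type*} [Fintype S] [DecidableEq S]
    {Sps : S → Type*} [∀ i, Fintype (Sps i)]
    (p : ∀ i, Sps i → ℝ) (hp : ∀ i s, 0 < p i s) (hsum : ∀ i, ∑ s, p i s = 1)
    (E : Finset S → (((∀ i, Sps i) → ℂ) →ₗ[ℂ] ((∀ i, Sps i) → ℂ)))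
    (hrange : ∀ I f, Depends (E I f) I)
    (hfix : ∀ I f, Depends f I → E I f = f)
    (hadj : ∀ (I : Finset S) (f g : (∀ i, Sps i) → ℂ),
      ∑ x, (∏ i, (p i (x i) : ℂ)) * (starRingEnd ℂ) ((E I f) x) * g x
        = ∑ x, (∏ i, (p i (x i) : ℂ)) * (starRingEnd ℂ) (f x) * (E I g) x)
    (C : Finset S → (((∀ i, Sps i) → ℂ) →ₗ[ℂ] ((∀ i, Sps i) → ℂ)))
    (hEC : ∀ I : Finset S, E I = ∑ J ∈ I.powerset, C J) :
    (∀ I : Finset S, LinearMap.range (C I) =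
      Submodule.span ℂ { f : (∀ i, Sps i) → ℂ | ∃ g : ∀ i, Sps i → ℂ,
        (∀ i ∈ I, ∑ s, (p i s : ℂ) * g i s = 0) ∧
        f = fun x => ∏ i ∈ I, g i (x i) }) ∧
    (∀ I J : Finset S, I ≠ J →
      ∀ f ∈ LinearMap.range (C I), ∀ g ∈ LinearMap.range (C J),
        ∑ x, (∏ i, (p i (x i) : ℂ)) * (starRingEnd ℂ) (f x) * g x = 0) ∧
    (⨆ I : Finset S, LinearMap.range (C I)) = ⊤ := by
  classical
  have hadj' : ∀ (I : Finset S) (f g : (∀ i, Sps i) → ℂ),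
      cip p (E I f) g = cip p f (E I g) := hadj
  -- evaluation of E on centered products
  have E_eval : ∀ (A J : Finset S) (g : ∀ i, Sps i → ℂ),
      (∀ i ∈ J, ∑ s, (p i s : ℂ) * g i s = 0) →
      E A (fun x => ∏ i ∈ J, g i (x i)) =
        if J ⊆ A then (fun x : ∀ i, Sps i => ∏ i ∈ J, g i (x i)) else 0 := by
    intro A J g hg
    by_cases hJA : J ⊆ A
    · rw [if_pos hJA]
      exact hfix A _ (depends_mono (depends_prod J g) hJA)
    · rw [if_neg hJA]
      set h : (∀ i, Sps i) → ℂ := fun x => ∏ i ∈ J, g i (x i) with hh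
      have h1 : cip p (E A h) (E A h) = cip p h (E A (E A h)) := hadj' A h (E A h)
      have h2 : E A (E A h) = E A h := hfix A _ (hrange A h)
      have h3 : cip p (E A h) h = 0 :=
        cip_depends_meanzero p hsum A J (E A h) (hrange A h) g hg hJA
      have h4 : cip p (E A h) (E A h) = 0 := by
        rw [h1, h2, cip_conj_symm, h3, map_zero]
      exact cip_definite p hp _ h4
  -- master : action of C on centered products
  have master : ∀ (J : Finset S) (g : ∀ i, Sps i → ℂ),
      (∀ i ∈ J, ∑ s, (p i s : ℂ) * g i s = 0) → ∀ I : Finset S,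
      C I (fun x => ∏ i ∈ J, g i (x i)) =
        if I = J then (fun x : ∀ i, Sps i => ∏ i ∈ J, g i (x i)) else 0 := by
    intro J g hg I
    induction I using Finset.strongInduction with
    | _ I ih =>
      set h : (∀ i, Sps i) → ℂ := fun x => ∏ i ∈ J, g i (x i) with hh
      have hsumI : E I h = C I h + ∑ A ∈ I.powerset.erase I, C A h := by
        rw [hEC I, LinearMap.sum_apply,
          ← Finset.add_sum_erase _ _ (Finset.mem_powerset_self I)]
      have hEIh : E I h = if J ⊆ I then h else 0 := E_eval I J g hg
      have hterm : ∀ A ∈ I.powerset.erase I, C A h = if A = J then h else 0 := by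
        intro A hA
        rw [Finset.mem_erase, Finset.mem_powerset] at hA
        exact ih A (lt_of_le_of_ne hA.2 hA.1)
      have hsum2 : (∑ A ∈ I.powerset.erase I, C A h)
          = if J ∈ I.powerset.erase I then h else 0 := by
        rw [Finset.sum_congr rfl hterm, Finset.sum_ite_eq' (I.powerset.erase I) J (fun _ => h)]
      have hCIh : C I h = E I h - ∑ A ∈ I.powerset.erase I, C A h :=
        eq_sub_of_add_eq hsumI.symm
      rw [hCIh, hEIh, hsum2]
      by_cases h1 : I = J
      · subst h1
        simp [Finset.mem_erase]
      · rw [if_neg h1]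
        by_cases h2 : J ⊆ I
        · have hJm : J ∈ I.powerset.erase I :=
            Finset.mem_erase.mpr ⟨fun hc => h1 hc.symm, Finset.mem_powerset.mpr h2⟩
          rw [if_pos h2, if_pos hJm, sub_self]
        · have hJm : J ∉ I.powerset.erase I := fun hc =>
            h2 (Finset.mem_powerset.mp (Finset.mem_erase.mp hc).2)
          rw [if_neg h2, if_neg hJm, sub_zero]
  have partA : ∀ I : Finset S, LinearMap.range (C I) =
      Submodule.span ℂ { f : (∀ i, Sps i) → ℂ | ∃ g : ∀ i, Sps i → ℂ,
        (∀ i ∈ I, ∑ s, (p i s : ℂ) * g i s = 0) ∧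
        f = fun x => ∏ i ∈ I, g i (x i) } := by
    intro I
    apply le_antisymm
    · rintro f ⟨f0, rfl⟩
      have htop : (⊤ : Submodule ℂ ((∀ i, Sps i) → ℂ)) ≤
          Submodule.comap (C I) (Submodule.span ℂ { f : (∀ i, Sps i) → ℂ |
            ∃ g : ∀ i, Sps i → ℂ, (∀ i ∈ I, ∑ s, (p i s : ℂ) * g i s = 0) ∧
            f = fun x => ∏ i ∈ I, g i (x i) }) := by
        rw [← span_fullprod_top, Submodule.span_le]
        rintro u ⟨g, rfl⟩
        simp only [Set.mem_preimage, SetLike.mem_coe, Submodule.mem_comap]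
        rw [prod_expand p g, map_sum]
        refine Submodule.sum_mem _ fun J _ => ?_
        rw [map_smul,
          master J (fun i s => g i s - ∑ t, (p i t : ℂ) * g i t)
            (fun i _ => meanzero_sub p hsum g i) I]
        by_cases hIJ : I = J
        · subst hIJ
          rw [if_pos rfl]
          exact Submodule.smul_mem _ _
            (Submodule.subset_span ⟨_, fun i _ => meanzero_sub p hsum g i, rfl⟩)
        · rw [if_neg hIJ, smul_zero]
          exact Submodule.zero_mem _
      exact htop Submodule.mem_top
    · rw [Submodule.span_le]
      rintro f ⟨g, hg, rfl⟩
      exact ⟨_, by rw [master I g hg I, if_pos rfl]⟩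
  refine ⟨partA, ?_, ?_⟩
  · intro I J hIJ f hf g hg
    rw [partA I] at hf
    rw [partA J] at hg
    show cip p f g = 0
    refine Submodule.span_induction ?_ ?_ ?_ ?_ hf
    · intro u hu
      refine Submodule.span_induction ?_ ?_ ?_ ?_ hg
      · rintro v ⟨b, hb, rfl⟩
        obtain ⟨a, ha, rfl⟩ := hu
        exact cip_prod_prod p I J a b ha hb hIJ
      · exact cip_zero_right p _
      · intro v w _ _ h1 h2
        rw [cip_add_right, h1, h2, add_zero]
      · intro c v _ h1
        rw [cip_smul_right, h1, mul_zero]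
    · exact cip_zero_left p _
    · intro u w _ _ h1 h2
      rw [cip_add_left, h1, h2, add_zero]
    · intro c u _ h1
      rw [cip_smul_left, h1, mul_zero]
  · rw [eq_top_iff]
    intro f _
    have h1 : E Finset.univ f = f :=
      hfix _ f fun x y h => congrArg f (funext fun i => h i (Finset.mem_univ i))
    have h2 : f = ∑ J ∈ Finset.univ.powerset, C J f := by
      conv_lhs => rw [← h1, hEC Finset.univ]
      rw [LinearMap.sum_apply]
    rw [h2]
    exact Submodule.sum_mem _ fun J _ =>
      Submodule.mem_iSup_of_mem J ⟨f, rfl⟩
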